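/- For s > 0, define ξ₀(s) = ∫₀¹ ((1−x)/(1+x))·s·x^{s−1} dx. Then ξ₀ is differentiable on (0,∞) with ξ₀′(s) = ∫₀¹ 2 x^s (log x) / (1+x)² dx, and consequently ξ₀′(s) < 0, so ξ₀ is strictly decreasing on (0,∞). -/

import Mathlib

open MeasureTheory Real Set

noncomputable def ξ₀ (s : ℝ) : ℝ :=
  ∫ x in (0:ℝ)..1, ((1 - x) / (1 + x)) * (s * x ^ (s - 1))

noncomputable def ξ₀' (s : ℝ) : ℝ :=
  ∫ x in (0:ℝ)..1, 2 * x ^ s * Real.log x / (1 + x) ^ 2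

private lemma meas_rpow_const (c : ℝ) : Measurable fun x : ℝ => x ^ c :=
  measurable_of_continuousOn_compl_singleton 0 <| continuousOn_of_forall_continuousAt
    fun x hx => Real.continuousAt_rpow_const x c (Or.inl hx)

private lemma meas_g : Measurable fun x : ℝ => (1 - x) / (1 + x) :=
  (measurable_const.sub measurable_id).div (measurable_const.add measurable_id)

private lemma abs_g_le {x : ℝ} (hx0 : 0 < x) : |(1 - x) / (1 + x)| ≤ 1 := by
  rw [abs_div, div_le_one (by rw [abs_of_pos (by linarith)]; linarith)]
  rw [abs_of_pos (show (0:ℝ) < 1 + x by linarith)]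
  rcases abs_cases (1 - x) with ⟨h, _⟩ | ⟨h, _⟩ <;> linarith

/-- |log x| ≤ (1/c) * x^(-c) on (0,1] -/
private lemma abs_log_le {x c : ℝ} (hx0 : 0 < x) (hx1 : x ≤ 1) (hc : 0 < c) :
    |Real.log x| ≤ c⁻¹ * x ^ (-c) := by
  rw [abs_of_nonpos (Real.log_nonpos hx0.le hx1)]
  have h := Real.log_le_rpow_div (x := x⁻¹) (inv_nonneg.2 hx0.le) hc
  rw [Real.log_inv, Real.inv_rpow hx0.le, ← Real.rpow_neg hx0.le] at h
  calc -Real.log x ≤ x ^ (-c) / c := h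
    _ = c⁻¹ * x ^ (-c) := by ring

private lemma integrable_c_rpow {c a : ℝ} (h : -1 < a) :
    IntervalIntegrable (fun x : ℝ => c * x ^ a) volume 0 1 :=
  (intervalIntegral.intervalIntegrable_rpow' h).const_mul c

/-- The key dominated-derivative step. -/
private lemma xi0_step (s₀ : ℝ) (hs : 0 < s₀) :
    IntervalIntegrable (fun x : ℝ => ((1 - x) / (1 + x)) * ((1 + s₀ * Real.log x) * x ^ (s₀ - 1)))
      volume 0 1 ∧
    HasDerivAt ξ₀
      (∫ x in (0:ℝ)..1, ((1 - x) / (1 + x)) * ((1 + s₀ * Real.log x) * x ^ (s₀ - 1))) s₀ := by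
  have hmeasF : ∀ s : ℝ, Measurable fun x : ℝ => ((1 - x) / (1 + x)) * (s * x ^ (s - 1)) :=
    fun s => meas_g.mul ((meas_rpow_const (s - 1)).const_mul s)
  have hmeasF' : Measurable fun x : ℝ =>
      ((1 - x) / (1 + x)) * ((1 + s₀ * Real.log x) * x ^ (s₀ - 1)) :=
    meas_g.mul (((measurable_const.add (Real.measurable_log.const_mul s₀)).mul
      (meas_rpow_const (s₀ - 1))))
  have huIoc : Set.uIoc (0:ℝ) 1 = Set.Ioc 0 1 := Set.uIoc_of_le zero_le_one
  have h := intervalIntegral.hasDerivAt_integral_of_dominated_loc_of_deriv_le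
    (F := fun s x => ((1 - x) / (1 + x)) * (s * x ^ (s - 1)))
    (F' := fun s x => ((1 - x) / (1 + x)) * ((1 + s * Real.log x) * x ^ (s - 1)))
    (x₀ := s₀) (a := 0) (b := 1) (μ := volume)
    (bound := fun x => 9 * x ^ (s₀ / 4 - 1)) (s := Metric.ball s₀ (s₀ / 2))
    (Metric.ball_mem_nhds _ (by positivity))
    (Filter.Eventually.of_forall fun s => (hmeasF s).aestronglyMeasurable)
    ?_ hmeasF'.aestronglyMeasurable ?_ (integrable_c_rpow (by linarith)) ?_
  · exact ⟨h.1, h.2⟩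
  · -- integrability of F s₀
    apply (integrable_c_rpow (c := s₀) (a := s₀ - 1) (by linarith)).mono_fun'
      (hmeasF s₀).aestronglyMeasurable
    filter_upwards [ae_restrict_mem measurableSet_uIoc] with x hx
    rw [huIoc] at hx
    have hx0 := hx.1
    have hrp : (0:ℝ) ≤ x ^ (s₀ - 1) := Real.rpow_nonneg hx0.le _
    calc ‖((1 - x) / (1 + x)) * (s₀ * x ^ (s₀ - 1))‖
        = |(1 - x) / (1 + x)| * (s₀ * x ^ (s₀ - 1)) := by
          rw [norm_mul, Real.norm_eq_abs, Real.norm_eq_abs,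
            abs_of_nonneg (by positivity : (0:ℝ) ≤ s₀ * x ^ (s₀ - 1))]
      _ ≤ 1 * (s₀ * x ^ (s₀ - 1)) := by
          apply mul_le_mul_of_nonneg_right (abs_g_le hx0); positivity
      _ = s₀ * x ^ (s₀ - 1) := one_mul _
  · -- the bound
    filter_upwards [] with x
    intro hx s hs'
    rw [huIoc] at hx
    obtain ⟨hx0, hx1⟩ := hx
    rw [Metric.mem_ball, Real.dist_eq] at hs'
    have hslo : s₀ / 2 < s := by cases abs_lt.1 hs' with | intro h1 h2 => linarith
    have hshi : s < 2 * s₀ := by cases abs_lt.1 hs' with | intro h1 h2 => linarith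
    have hpow1 : x ^ (s - 1) ≤ x ^ (s₀ / 2 - 1) :=
      Real.rpow_le_rpow_of_exponent_ge hx0 hx1 (by linarith)
    have hpow2 : x ^ (s₀ / 2 - 1) ≤ x ^ (s₀ / 4 - 1) :=
      Real.rpow_le_rpow_of_exponent_ge hx0 hx1 (by linarith)
    have hlog : |Real.log x| ≤ (s₀ / 4)⁻¹ * x ^ (-(s₀ / 4)) :=
      abs_log_le hx0 hx1 (by positivity)
    have hmulpow : x ^ (-(s₀ / 4)) * x ^ (s₀ / 2 - 1) = x ^ (s₀ / 4 - 1) := by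
      rw [← Real.rpow_add hx0]; ring_nf
    have hrp : (0:ℝ) ≤ x ^ (s - 1) := Real.rpow_nonneg hx0.le _
    have hrp2 : (0:ℝ) ≤ x ^ (s₀ / 2 - 1) := Real.rpow_nonneg hx0.le _
    have hrp4 : (0:ℝ) ≤ x ^ (s₀ / 4 - 1) := Real.rpow_nonneg hx0.le _
    have step1 : ‖((1 - x) / (1 + x)) * ((1 + s * Real.log x) * x ^ (s - 1))‖
        ≤ |1 + s * Real.log x| * x ^ (s - 1) := by
      rw [norm_mul, Real.norm_eq_abs, Real.norm_eq_abs, abs_mul, abs_of_nonneg hrp]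
      calc |(1 - x) / (1 + x)| * (|1 + s * Real.log x| * x ^ (s - 1))
          ≤ 1 * (|1 + s * Real.log x| * x ^ (s - 1)) :=
            mul_le_mul_of_nonneg_right (abs_g_le hx0) (by positivity)
        _ = |1 + s * Real.log x| * x ^ (s - 1) := one_mul _
    have step2 : |1 + s * Real.log x| ≤ 1 + 2 * s₀ * |Real.log x| := by
      calc |1 + s * Real.log x| ≤ |(1:ℝ)| + |s * Real.log x| := abs_add_le _ _
        _ = 1 + s * |Real.log x| := by
            rw [abs_one, abs_mul, abs_of_pos (by linarith : (0:ℝ) < s)]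
        _ ≤ 1 + 2 * s₀ * |Real.log x| := by
            have := abs_nonneg (Real.log x); nlinarith
    have step3 : (1 + 2 * s₀ * |Real.log x|) * x ^ (s₀ / 2 - 1) ≤ 9 * x ^ (s₀ / 4 - 1) := by
      have hlg : 2 * s₀ * |Real.log x| * x ^ (s₀ / 2 - 1)
          ≤ 2 * s₀ * ((s₀ / 4)⁻¹ * x ^ (-(s₀ / 4))) * x ^ (s₀ / 2 - 1) := by
        apply mul_le_mul_of_nonneg_right _ hrp2
        apply mul_le_mul_of_nonneg_left hlog (by positivity)
      have heq : 2 * s₀ * ((s₀ / 4)⁻¹ * x ^ (-(s₀ / 4))) * x ^ (s₀ / 2 - 1)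
          = 8 * x ^ (s₀ / 4 - 1) := by
        rw [mul_assoc (2 * s₀), mul_assoc ((s₀/4)⁻¹), hmulpow]
        field_simp
        ring
      nlinarith [abs_nonneg (Real.log x)]
    calc ‖((1 - x) / (1 + x)) * ((1 + s * Real.log x) * x ^ (s - 1))‖
        ≤ |1 + s * Real.log x| * x ^ (s - 1) := step1
      _ ≤ (1 + 2 * s₀ * |Real.log x|) * x ^ (s - 1) :=
          mul_le_mul_of_nonneg_right step2 hrp
      _ ≤ (1 + 2 * s₀ * |Real.log x|) * x ^ (s₀ / 2 - 1) := by
          apply mul_le_mul_of_nonneg_left hpow1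
          have := abs_nonneg (Real.log x); nlinarith
      _ ≤ 9 * x ^ (s₀ / 4 - 1) := step3
  · -- differentiability in s
    filter_upwards [] with x
    intro hx s _
    rw [huIoc] at hx
    have hx0 := hx.1
    have hc : HasDerivAt (fun y : ℝ => x ^ y) (x ^ (s - 1) * Real.log x) (s - 1) :=
      (Real.hasStrictDerivAt_const_rpow hx0 (s - 1)).hasDerivAt
    have hshift : HasDerivAt (fun y : ℝ => y - 1) 1 s := (hasDerivAt_id s).sub_const 1
    have hcomp : HasDerivAt (fun y : ℝ => x ^ (y - 1)) (x ^ (s - 1) * Real.log x * 1) s :=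
      HasDerivAt.comp s hc hshift
    have hmul := (hasDerivAt_id s).mul hcomp
    have h2 := hmul.const_mul ((1 - x) / (1 + x))
    simp only [id_eq, Pi.mul_def] at h2
    convert h2 using 1
    · rfl
    ring

/-- The integration-by-parts identity. -/
private lemma xi0_ibp (s : ℝ) (hs : 0 < s) :
    ∫ x in (0:ℝ)..1, ((1 - x) / (1 + x)) * ((1 + s * Real.log x) * x ^ (s - 1)) = ξ₀' s := by
  set P : ℝ → ℝ := fun x => (-2 / (1 + x) ^ 2) * (x ^ s * Real.log x) with hP
  set Q : ℝ → ℝ := fun x => ((1 - x) / (1 + x)) * ((1 + s * Real.log x) * x ^ (s - 1)) with hQ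
  have hQint : IntervalIntegrable Q volume 0 1 := (xi0_step s hs).1
  have hPmeas : Measurable P :=
    ((measurable_const.div ((measurable_const.add measurable_id).pow measurable_const))).mul
      ((meas_rpow_const s).mul Real.measurable_log)
  have hPint : IntervalIntegrable P volume 0 1 := by
    apply (integrable_c_rpow (c := 4) (a := -(1/2 : ℝ)) (by norm_num)).mono_fun'
      hPmeas.aestronglyMeasurable
    filter_upwards [ae_restrict_mem measurableSet_uIoc] with x hx
    rw [Set.uIoc_of_le zero_le_one] at hx
    obtain ⟨hx0, hx1⟩ := hx
    have h1 : (1:ℝ) ≤ (1 + x) ^ 2 := by nlinarith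
    have hxs : x ^ s ≤ 1 := Real.rpow_le_one hx0.le hx1 hs.le
    have hxs0 : (0:ℝ) ≤ x ^ s := Real.rpow_nonneg hx0.le _
    have hlog : |Real.log x| ≤ 2 * x ^ (-(1/2 : ℝ)) := by
      have := abs_log_le hx0 hx1 (show (0:ℝ) < 1/2 by norm_num)
      calc |Real.log x| ≤ (1/2 : ℝ)⁻¹ * x ^ (-(1/2 : ℝ)) := this
        _ = 2 * x ^ (-(1/2 : ℝ)) := by norm_num
    have hd : |(-2) / (1 + x) ^ 2| ≤ 2 := by
      rw [abs_div, abs_of_nonneg (by positivity : (0:ℝ) ≤ (1 + x) ^ 2),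
        show |(-2:ℝ)| = 2 by norm_num, div_le_iff₀ (by positivity)]
      nlinarith
    calc ‖P x‖ = |(-2) / (1 + x) ^ 2| * (x ^ s * |Real.log x|) := by
          rw [Real.norm_eq_abs, hP, abs_mul, abs_mul, abs_of_nonneg hxs0]
      _ ≤ 2 * (1 * |Real.log x|) := by
          apply mul_le_mul hd _ (by positivity) (by norm_num)
          exact mul_le_mul_of_nonneg_right hxs (abs_nonneg _)
      _ = 2 * |Real.log x| := by ring
      _ ≤ 2 * (2 * x ^ (-(1/2:ℝ))) := by linarith
      _ = 4 * x ^ (-(1/2:ℝ)) := by ring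
  -- FTC with limits for u x = g x * (x^s * log x)
  have hftc : ∫ x in (0:ℝ)..1, (P x + Q x) = (0:ℝ) - 0 := by
    apply intervalIntegral.integral_eq_sub_of_hasDerivAt_of_tendsto zero_lt_one
      (f := fun x => ((1 - x) / (1 + x)) * (x ^ s * Real.log x))
    · intro x hx
      obtain ⟨hx0, hx1⟩ := hx
      have hne : (1:ℝ) + x ≠ 0 := by linarith
      have hgd := ((hasDerivAt_const x (1:ℝ)).sub (hasDerivAt_id x)).div
          ((hasDerivAt_const x (1:ℝ)).add (hasDerivAt_id x)) hne
      simp only [id_eq, Pi.sub_def, Pi.add_def, Pi.div_def] at hgd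
      have hpow : HasDerivAt (fun x : ℝ => x ^ s) (s * x ^ (s - 1)) x :=
        Real.hasDerivAt_rpow_const (Or.inl hx0.ne')
      have hlog : HasDerivAt Real.log x⁻¹ x := Real.hasDerivAt_log hx0.ne'
      have hv := hpow.mul hlog
      have hu := hgd.mul hv
      convert hu using 1
      · rfl
      · simp only [Pi.mul_def]
      have hxinv : x ^ s * x⁻¹ = x ^ (s - 1) := by
        rw [Real.rpow_sub_one hx0.ne']; field_simp
      simp only [hP, hQ, Pi.mul_apply]
      rw [← hxinv]
      field_simp
      ring
    · exact hPint.add hQint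
    · -- limit at 0⁺
      have h1 : Filter.Tendsto (fun x : ℝ => (1 - x) / (1 + x)) (nhdsWithin 0 (Set.Ioi 0))
          (nhds 1) := by
        have hgc : ContinuousAt (fun x : ℝ => (1 - x) / (1 + x)) 0 := by
          apply ContinuousAt.div (by fun_prop) (by fun_prop)
          norm_num
        have h0 := hgc.tendsto
        norm_num at h0
        exact h0.mono_left nhdsWithin_le_nhds
      have h2 : Filter.Tendsto (fun x : ℝ => x ^ s * Real.log x) (nhdsWithin 0 (Set.Ioi 0))
          (nhds 0) := by
        have := tendsto_log_mul_rpow_nhdsGT_zero hs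
        have heq : (fun x : ℝ => Real.log x * x ^ s) = fun x : ℝ => x ^ s * Real.log x := by
          funext x; ring
        rw [heq] at this; exact this
      have := h1.mul h2
      simpa using this
    · -- limit at 1⁻
      have hcont : Filter.Tendsto (fun x : ℝ => ((1 - x) / (1 + x)) * (x ^ s * Real.log x))
          (nhds 1) (nhds 0) := by
        have hc : ContinuousAt (fun x : ℝ => ((1 - x) / (1 + x)) * (x ^ s * Real.log x)) 1 := by
          apply ContinuousAt.mul
          · apply ContinuousAt.div (by fun_prop) (by fun_prop)
            norm_num
          · exact ((Real.continuousAt_rpow_const 1 s (Or.inl one_ne_zero)).mul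
              (Real.continuousAt_log one_ne_zero))
        have : (fun x : ℝ => ((1 - x) / (1 + x)) * (x ^ s * Real.log x)) 1 = 0 := by
          simp
        rw [← this]
        exact hc.tendsto
      exact hcont.mono_left nhdsWithin_le_nhds
  rw [intervalIntegral.integral_add hPint hQint] at hftc
  have hQval : ∫ x in (0:ℝ)..1, Q x = -∫ x in (0:ℝ)..1, P x := by linarith
  have hneg : -∫ x in (0:ℝ)..1, P x = ∫ x in (0:ℝ)..1, (2 * x ^ s * Real.log x / (1 + x) ^ 2) := by
    rw [← intervalIntegral.integral_neg]
    apply intervalIntegral.integral_congr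
    intro x _
    simp only [hP]
    ring
  rw [hQ] at hQval
  rw [hQval, hneg, ξ₀']

private lemma xi0'_neg (s : ℝ) (hs : 0 < s) : ξ₀' s < 0 := by
  have hmeas : Measurable fun x : ℝ => 2 * x ^ s * Real.log x / (1 + x) ^ 2 :=
    (((meas_rpow_const s).const_mul 2).mul Real.measurable_log).div
      ((measurable_const.add measurable_id).pow measurable_const)
  have hint : IntervalIntegrable (fun x : ℝ => 2 * x ^ s * Real.log x / (1 + x) ^ 2)
      volume 0 1 := by
    apply (integrable_c_rpow (c := 4) (a := -(1/2 : ℝ)) (by norm_num)).mono_fun'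
      hmeas.aestronglyMeasurable
    filter_upwards [ae_restrict_mem measurableSet_uIoc] with x hx
    rw [Set.uIoc_of_le zero_le_one] at hx
    obtain ⟨hx0, hx1⟩ := hx
    have h1 : (1:ℝ) ≤ (1 + x) ^ 2 := by nlinarith
    have hxs : x ^ s ≤ 1 := Real.rpow_le_one hx0.le hx1 hs.le
    have hxs0 : (0:ℝ) ≤ x ^ s := Real.rpow_nonneg hx0.le _
    have hlog : |Real.log x| ≤ 2 * x ^ (-(1/2 : ℝ)) := by
      have := abs_log_le hx0 hx1 (show (0:ℝ) < 1/2 by norm_num)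
      calc |Real.log x| ≤ (1/2 : ℝ)⁻¹ * x ^ (-(1/2 : ℝ)) := this
        _ = 2 * x ^ (-(1/2 : ℝ)) := by norm_num
    have hd : |(2 : ℝ) / (1 + x) ^ 2| ≤ 2 := by
      rw [abs_div, abs_of_nonneg (by positivity : (0:ℝ) ≤ (1 + x) ^ 2),
        show |(2:ℝ)| = 2 by norm_num, div_le_iff₀ (by positivity)]
      nlinarith
    calc ‖2 * x ^ s * Real.log x / (1 + x) ^ 2‖
        = |(2:ℝ) / (1 + x) ^ 2| * (x ^ s * |Real.log x|) := by
          rw [Real.norm_eq_abs]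
          rw [show 2 * x ^ s * Real.log x / (1 + x) ^ 2
            = (2 / (1 + x) ^ 2) * (x ^ s * Real.log x) by ring]
          rw [abs_mul, abs_mul, abs_of_nonneg hxs0]
      _ ≤ 2 * (1 * |Real.log x|) := by
          apply mul_le_mul hd _ (by positivity) (by norm_num)
          exact mul_le_mul_of_nonneg_right hxs (abs_nonneg _)
      _ = 2 * |Real.log x| := by ring
      _ ≤ 2 * (2 * x ^ (-(1/2:ℝ))) := by linarith
      _ = 4 * x ^ (-(1/2:ℝ)) := by ring
  have hpos : 0 < ∫ x in (0:ℝ)..1, -(2 * x ^ s * Real.log x / (1 + x) ^ 2) := by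
    apply intervalIntegral.intervalIntegral_pos_of_pos_on hint.neg
    · intro x hx
      obtain ⟨hx0, hx1⟩ := hx
      have hlog : Real.log x < 0 := Real.log_neg hx0 hx1
      have hxs : (0:ℝ) < x ^ s := Real.rpow_pos_of_pos hx0 s
      have h2 : (0:ℝ) < (1 + x) ^ 2 := by positivity
      have : 2 * x ^ s * Real.log x / (1 + x) ^ 2 < 0 := by
        apply div_neg_of_neg_of_pos _ h2
        nlinarith
      simp only [Pi.neg_apply]
      linarith
    · norm_num
  rw [intervalIntegral.integral_neg] at hpos
  rw [ξ₀']
  linarith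

theorem xi0_deriv_and_strictAnti :
    (∀ s ∈ Set.Ioi (0:ℝ), HasDerivAt ξ₀ (ξ₀' s) s ∧ ξ₀' s < 0) ∧
      StrictAntiOn ξ₀ (Set.Ioi 0) := by
  have hmain : ∀ s ∈ Set.Ioi (0:ℝ), HasDerivAt ξ₀ (ξ₀' s) s ∧ ξ₀' s < 0 := by
    intro s hs
    rw [Set.mem_Ioi] at hs
    have h := (xi0_step s hs).2
    rw [xi0_ibp s hs] at h
    exact ⟨h, xi0'_neg s hs⟩
  refine ⟨hmain, ?_⟩
  apply strictAntiOn_of_deriv_neg (convex_Ioi 0)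
  · intro x hx
    exact ((hmain x hx).1.continuousAt).continuousWithinAt
  · intro x hx
    rw [interior_Ioi] at hx
    rw [(hmain x hx).1.deriv]
    exact (hmain x hx).2
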